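/- Let F ≥ 7 and m ≥ 1 be integers, let S = mF + r with 3 ≤ r ≤ F−3, and let d = gcd(F,S). Let P be a (K, F, F−2, S)-PDA with K maximal, i.e., K = K_{(F,2,S)}. Then every row of P contains at most S − (m+1) cells occupied by integers, and at least F − r + d rows of P contain exactly S − (m+1) cells occupied by integers. -/

import Mathlib

/-- A `(K, F, Z, S)` placement delivery array: an `F × K` array over
`{0, …, S-1} ∪ {*}` (with `none` playing the role of `*`) such that
(1) each integer occurs at most once in each row and in each column,
(2) whenever two distinct cells `(a, b)` and `(c, d)` contain the same
integer, the opposite corners `(a, d)` and `(c, b)` contain `*`, and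
(3) the symbol `*` occurs exactly `Z` times in each column. -/
def IsPDA (K F Z S : ℕ) (P : Fin F → Fin K → Option (Fin S)) : Prop :=
  (∀ (i : Fin F) (j j' : Fin K) (s : Fin S), P i j = some s → P i j' = some s → j = j') ∧
  (∀ (i i' : Fin F) (j : Fin K) (s : Fin S), P i j = some s → P i' j = some s → i = i') ∧
  (∀ (a c : Fin F) (b d : Fin K) (s : Fin S),
      (a, b) ≠ (c, d) → P a b = some s → P c d = some s →
      P a d = none ∧ P c b = none) ∧
  (∀ j : Fin K, (Finset.univ.filter (fun i => P i j = none)).card = Z)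

/-- There exists a `(K, F, Z, S)` placement delivery array. -/
def PDAExists (K F Z S : ℕ) : Prop :=
  ∃ P : Fin F → Fin K → Option (Fin S), IsPDA K F Z S P


namespace PDAC

/-- ceiling division -/
def cdiv (a b : ℕ) : ℕ := (a + b - 1) / b

lemma cdiv_le (a b : ℕ) (hb : 0 < b) : a ≤ cdiv a b * b := by
  unfold cdiv
  rcases Nat.eq_zero_or_pos a with ha | ha
  · simp [ha]
  have h1 := Nat.div_add_mod (a + b - 1) b
  have h2 := Nat.mod_lt (a + b - 1) hb
  have h3 : (a + b - 1) / b * b = b * ((a + b - 1) / b) := Nat.mul_comm _ _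
  omega

lemma cdiv_lt (a b : ℕ) (hb : 0 < b) : cdiv a b * b < a + b := by
  unfold cdiv
  have h1 := Nat.div_mul_le_self (a + b - 1) b
  omega

lemma floor_le (a b : ℕ) : a / b * b ≤ a := Nat.div_mul_le_self a b

lemma lt_floor_add (a b : ℕ) (hb : 0 < b) : a < (a / b + 1) * b := by
  have h1 := Nat.div_add_mod a b
  have h2 := Nat.mod_lt a hb
  have h3 : (a / b + 1) * b = b * (a/b) + b := by ring
  omega

lemma le_cdiv_iff {a b c : ℕ} (hb : 0 < b) : cdiv a b ≤ c ↔ a ≤ c * b := by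
  constructor
  · intro h
    calc a ≤ cdiv a b * b := cdiv_le a b hb
    _ ≤ c * b := Nat.mul_le_mul_right b h
  · intro h
    by_contra hlt
    push_neg at hlt
    have h1 : (c+1) * b ≤ cdiv a b * b := Nat.mul_le_mul_right b hlt
    have h2 := cdiv_lt a b hb
    have h3 : (c+1) * b = c * b + b := by ring
    omega

lemma le_floor_iff {a b c : ℕ} (hb : 0 < b) : c ≤ a / b ↔ c * b ≤ a := by
  rw [Nat.le_div_iff_mul_le hb]


/-! ### The matching maps of the construction -/

def cC (F S i : ℕ) : ℕ := cdiv ((i+1)*S) F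
def rho (F S i s : ℕ) : ℕ := s + 1 - cC F S i
def kap (F S i s : ℕ) : ℕ := cdiv (rho F S i s * F) S
def phiX (F S i s : ℕ) : ℕ := i + kap F S i s
def bB (F S i s : ℕ) : ℕ := phiX F S i s * S / F
def phiT (F S i s : ℕ) : ℕ := bB F S i s - rho F S i s

lemma phi_facts {F S i s : ℕ} (hF : 0 < F) (hS : 0 < S)
    (hi : i < F) (hs : s < S) (hb : (i+1)*S ≤ s*F) :
    phiX F S i s < F ∧ i < phiX F S i s ∧
    (phiX F S i s)*S < (s+1)*F ∧ s*F < (phiX F S i s + 1)*S ∧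
    (phiT F S i s)*F < (i+1)*S ∧ i*S < (phiT F S i s + 1)*F ∧
    (phiT F S i s + 1)*F ≤ (phiX F S i s)*S ∧
    phiT F S i s < s ∧
    phiT F S i s + rho F S i s = bB F S i s ∧
    s + 1 = cC F S i + rho F S i s ∧ 1 ≤ rho F S i s := by
  set C := cC F S i with hC
  set ρ := rho F S i s with hρdef
  set κ := kap F S i s with hκdef
  have hxdef : phiX F S i s = i + κ := rfl
  set x := phiX F S i s with hxd
  set B := bB F S i s with hBdef
  have hBeq : B = x * S / F := rfl
  have f1 : (i+1)*S ≤ C*F := cdiv_le _ _ hF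
  have f2 : C*F < (i+1)*S + F := cdiv_lt _ _ hF
  have hsC : C ≤ s := by
    by_contra hlt
    push_neg at hlt
    have h1 : (s+1)*F ≤ C*F := Nat.mul_le_mul_right F hlt
    have h4 : (s+1)*F = s*F + F := by ring
    omega
  have hρ1 : 1 ≤ ρ := by rw [hρdef]; unfold rho; omega
  have hρe : s + 1 = C + ρ := by rw [hρdef]; unfold rho; omega
  have f3 : ρ*F ≤ κ*S := cdiv_le _ _ hS
  have f4 : κ*S < ρ*F + S := cdiv_lt _ _ hS
  have hρF : F ≤ ρ*F := by
    calc F = 1*F := (one_mul F).symm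
    _ ≤ ρ*F := Nat.mul_le_mul_right F hρ1
  have hκ1 : 1 ≤ κ := by
    rcases Nat.eq_zero_or_pos κ with h | h
    · exfalso; rw [h] at f3; simp at f3; omega
    · exact h
  -- distribute products
  have d2 : (i+1)*S = i*S + S := by ring
  have d3 : x*S = i*S + κ*S := by rw [hxdef]; ring
  have d6 : s*F + F = C*F + ρ*F := by
    calc s*F + F = (s+1)*F := by ring
    _ = (C+ρ)*F := by rw [hρe]
    _ = C*F + ρ*F := by ring
  -- x < F
  have g1 : x < F := by
    have h5 : x*S < F*S := by
      have e2 : (s+1)*F ≤ S*F := Nat.mul_le_mul_right F hs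
      have e3 : (s+1)*F = s*F + F := by ring
      have e4 : S*F = F*S := Nat.mul_comm _ _
      omega
    exact Nat.lt_of_mul_lt_mul_right h5
  have g6 : i < x := by omega
  -- B facts
  have f5 : B*F ≤ x*S := by rw [hBeq]; exact floor_le _ _
  have f6 : x*S < B*F + F := by
    have := lt_floor_add (x*S) F hF
    have e : (x*S/F + 1)*F = x*S/F*F + F := by ring
    rw [hBeq]; omega
  have gB : ρ ≤ B := by
    rw [hBeq, Nat.le_div_iff_mul_le hF]
    omega
  have htdef : phiT F S i s = B - ρ := rfl
  set t := phiT F S i s with htd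
  have ht : t + ρ = B := by rw [htdef]; omega
  have dt : t*F + ρ*F = B*F := by
    calc t*F + ρ*F = (t+ρ)*F := by ring
    _ = B*F := by rw [ht]
  have d5 : (t+1)*F = t*F + F := by ring
  have g2a : x*S < (s+1)*F := by
    have e3 : (s+1)*F = s*F + F := by ring
    omega
  have g2b : s*F < (x+1)*S := by
    have e4 : (x+1)*S = i*S + κ*S + S := by rw [hxdef]; ring
    omega
  have g3a : t*F < (i+1)*S := by omega
  have g3b : i*S < (t+1)*F := by omega
  have g4 : (t+1)*F ≤ x*S := by omega
  have g5 : t < s := by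
    have h7 : t*F < s*F := by omega
    exact Nat.lt_of_mul_lt_mul_right h7
  exact ⟨g1, g6, g2a, g2b, g3a, g3b, g4, g5, ht, hρe, hρ1⟩

/-- injectivity of the matching -/
lemma phi_inj {F S i s i' s' : ℕ} (hF : 0 < F) (hS : 0 < S)
    (hi : i < F) (hs : s < S) (hb : (i+1)*S ≤ s*F)
    (hi' : i' < F) (hs' : s' < S) (hb' : (i'+1)*S ≤ s'*F)
    (hx : phiX F S i s = phiX F S i' s') (ht : phiT F S i s = phiT F S i' s') :
    i = i' ∧ s = s' := by
  obtain ⟨_, _, _, _, _, _, _, _, hB1, hC1, _⟩ := phi_facts hF hS hi hs hb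
  obtain ⟨_, _, _, _, _, _, _, _, hB2, hC2, _⟩ := phi_facts hF hS hi' hs' hb'
  have hBx : bB F S i s = bB F S i' s' := by
    unfold bB; rw [hx]
  have hρeq : rho F S i s = rho F S i' s' := by omega
  have hκeq : kap F S i s = kap F S i' s' := by unfold kap; rw [hρeq]
  have hieq : i = i' := by
    have := hx
    unfold phiX at this
    omega
  have hCeq : cC F S i = cC F S i' := by rw [hieq]
  omega


section Counting

variable (F S : ℕ)

def grid : Finset (ℕ × ℕ) := Finset.range F ×ˢ Finset.range S

def Below : Finset (ℕ × ℕ) := (grid F S).filter (fun c => (c.1+1)*S ≤ c.2*F)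

def Above : Finset (ℕ × ℕ) := (grid F S).filter (fun c => (c.2+1)*F ≤ c.1*S)

def Crossed : Finset (ℕ × ℕ) :=
  (grid F S).filter (fun c => c.1*S < (c.2+1)*F ∧ c.2*F < (c.1+1)*S)

lemma mem_grid {c : ℕ × ℕ} : c ∈ grid F S ↔ c.1 < F ∧ c.2 < S := by
  simp [grid, Finset.mem_product]

lemma below_card_eq_above_card : (Below F S).card = (Above F S).card := by
  apply Finset.card_nbij' (i := fun c => (F-1-c.1, S-1-c.2)) (j := fun c => (F-1-c.1, S-1-c.2))
  · intro c hc
    simp only [Below, Above, Finset.mem_coe, Finset.mem_filter, mem_grid] at hc ⊢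
    obtain ⟨⟨hi, hs⟩, hb⟩ := hc
    refine ⟨⟨by omega, by omega⟩, ?_⟩
    have e1 : (S-1-c.2+1)*F + c.2*F = S*F := by
      have h : (S-1-c.2+1) + c.2 = S := by omega
      calc (S-1-c.2+1)*F + c.2*F = ((S-1-c.2+1) + c.2)*F := by ring
      _ = S*F := by rw [h]
    have e2 : (F-1-c.1)*S + (c.1+1)*S = F*S := by
      have h : (F-1-c.1) + (c.1+1) = F := by omega
      calc (F-1-c.1)*S + (c.1+1)*S = ((F-1-c.1) + (c.1+1))*S := by ring
      _ = F*S := by rw [h]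
    have e3 : S*F = F*S := Nat.mul_comm _ _
    omega
  · intro c hc
    simp only [Below, Above, Finset.mem_coe, Finset.mem_filter, mem_grid] at hc ⊢
    obtain ⟨⟨hi, hs⟩, hb⟩ := hc
    refine ⟨⟨by omega, by omega⟩, ?_⟩
    have e1 : (F-1-c.1+1)*S + c.1*S = F*S := by
      have h : (F-1-c.1+1) + c.1 = F := by omega
      calc (F-1-c.1+1)*S + c.1*S = ((F-1-c.1+1) + c.1)*S := by ring
      _ = F*S := by rw [h]
    have e2 : (S-1-c.2)*F + (c.2+1)*F = S*F := by
      have h : (S-1-c.2) + (c.2+1) = S := by omega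
      calc (S-1-c.2)*F + (c.2+1)*F = ((S-1-c.2) + (c.2+1))*F := by ring
      _ = S*F := by rw [h]
    have e3 : S*F = F*S := Nat.mul_comm _ _
    omega
  · intro c hc
    obtain ⟨c1, c2⟩ := c
    simp only [Below, Finset.mem_coe, Finset.mem_filter, mem_grid] at hc
    obtain ⟨⟨hi, hs⟩, _⟩ := hc
    simp only [Prod.mk.injEq]
    omega
  · intro c hc
    obtain ⟨c1, c2⟩ := c
    simp only [Above, Finset.mem_coe, Finset.mem_filter, mem_grid] at hc
    obtain ⟨⟨hi, hs⟩, _⟩ := hc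
    simp only [Prod.mk.injEq]
    omega

lemma below_above_crossed_partition :
    (Below F S).card + (Above F S).card + (Crossed F S).card = F * S := by
  classical
  have huniv : (grid F S).card = F * S := by
    simp [grid, Finset.card_product]
  have h1 := Finset.card_filter_add_card_filter_not
    (s := grid F S) (p := fun c : ℕ × ℕ => (c.1+1)*S ≤ c.2*F)
  have h2 := Finset.card_filter_add_card_filter_not
    (s := (grid F S).filter (fun c : ℕ × ℕ => ¬ (c.1+1)*S ≤ c.2*F))
    (p := fun c : ℕ × ℕ => (c.2+1)*F ≤ c.1*S)
  rw [Finset.filter_filter, Finset.filter_filter] at h2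
  have e1 : ((grid F S).filter (fun c : ℕ × ℕ =>
      (¬ (c.1+1)*S ≤ c.2*F) ∧ (c.2+1)*F ≤ c.1*S)) = Above F S := by
    ext c
    simp only [Above, Finset.mem_filter, mem_grid]
    have d1 : (c.1+1)*S = c.1*S + S := by ring
    have d2 : (c.2+1)*F = c.2*F + F := by ring
    constructor
    · rintro ⟨hg, _, h⟩; exact ⟨hg, h⟩
    · rintro ⟨hg, h⟩; exact ⟨hg, by omega, h⟩
  have e2 : ((grid F S).filter (fun c : ℕ × ℕ =>
      (¬ (c.1+1)*S ≤ c.2*F) ∧ ¬ (c.2+1)*F ≤ c.1*S)) = Crossed F S := by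
    ext c
    simp only [Crossed, Finset.mem_filter, mem_grid]
    constructor
    · rintro ⟨hg, h1, h2⟩; exact ⟨hg, by omega, by omega⟩
    · rintro ⟨hg, h1, h2⟩; exact ⟨hg, by omega, by omega⟩
  rw [e1, e2] at h2
  unfold Below
  omega

end Counting


lemma cdiv_eq_div (a b : ℕ) (hb : 0 < b) :
    cdiv a b + (if b ∣ a then 1 else 0) = a / b + 1 := by
  rcases Nat.eq_zero_or_pos a with ha | ha
  · subst ha
    simp only [Nat.dvd_zero, if_pos, Nat.zero_div]
    unfold cdiv
    rw [Nat.zero_add, Nat.div_eq_of_lt (by omega)]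
  by_cases h : b ∣ a
  · rw [if_pos h]
    obtain ⟨k, rfl⟩ := h
    have h1 : b * k + b - 1 = (b-1) + b * k := by omega
    unfold cdiv
    rw [h1, Nat.add_mul_div_left _ _ hb, Nat.div_eq_of_lt (by omega),
      Nat.mul_div_cancel_left _ hb]
    omega
  · rw [if_neg h]
    have h1 := Nat.div_add_mod a b
    have h2 : a % b < b := Nat.mod_lt _ hb
    have h3 : a % b ≠ 0 := fun hh => h (Nat.dvd_of_mod_eq_zero hh)
    have h5 : b*(a/b+1) = b*(a/b) + b := by ring
    have h4 : a + b - 1 = (a % b - 1) + b * (a/b + 1) := by omega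
    unfold cdiv
    rw [h4, Nat.add_mul_div_left _ _ hb, Nat.div_eq_of_lt (by omega)]
    omega


lemma row_filter_eq (F S i : ℕ) (hF : 0 < F) (hi : i < F) :
    (Finset.range S).filter (fun t => i*S < (t+1)*F ∧ t*F < (i+1)*S)
      = Finset.Ico (i*S/F) (cC F S i) := by
  have hCS : cC F S i ≤ S := by
    unfold cC
    rw [le_cdiv_iff hF]
    calc (i+1)*S ≤ F*S := Nat.mul_le_mul_right S (by omega)
    _ = S*F := Nat.mul_comm _ _
  ext t
  simp only [Finset.mem_filter, Finset.mem_range, Finset.mem_Ico]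
  constructor
  · rintro ⟨hts, h1, h2⟩
    constructor
    · by_contra hlt
      push_neg at hlt
      have h3 : (t+1)*F ≤ (i*S/F)*F := Nat.mul_le_mul_right F (by omega)
      have h4 := floor_le (i*S) F
      omega
    · by_contra hlt
      push_neg at hlt
      have h3 : (cC F S i)*F ≤ t*F := Nat.mul_le_mul_right F hlt
      have h4 := cdiv_le ((i+1)*S) F hF
      unfold cC at h3
      omega
  · rintro ⟨hb, hc⟩
    have h5 : t < S := lt_of_lt_of_le hc hCS
    refine ⟨h5, ?_, ?_⟩
    · have h6 := lt_floor_add (i*S) F hF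
      have h7 : (i*S/F + 1)*F ≤ (t+1)*F := Nat.mul_le_mul_right F (by omega)
      omega
    · have h8 : (t+1)*F ≤ (cC F S i)*F := Nat.mul_le_mul_right F (by omega)
      have h9 := cdiv_lt ((i+1)*S) F hF
      unfold cC at h8
      have h10 : (t+1)*F = t*F + F := by ring
      omega

lemma crossed_card (F S : ℕ) (hF : 0 < F) (hS : 0 < S) :
    (Crossed F S).card + Nat.gcd F S = F + S := by
  classical
  -- fiberwise
  have hfib : (Crossed F S).card
      = ∑ i ∈ Finset.range F, ((Finset.range S).filter
          (fun t => i*S < (t+1)*F ∧ t*F < (i+1)*S)).card := by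
    rw [Finset.card_eq_sum_card_fiberwise (f := Prod.fst) (t := Finset.range F)
      (fun c hc => by
        simp only [Crossed, Finset.mem_coe, Finset.mem_filter, mem_grid] at hc
        exact Finset.mem_range.mpr hc.1.1)]
    apply Finset.sum_congr rfl
    intro i hi
    rw [Finset.mem_range] at hi
    apply Finset.card_nbij' (i := fun c => c.2) (j := fun t => (i, t))
    · intro c hc
      simp only [Finset.mem_coe, Finset.mem_filter, Crossed, mem_grid] at hc
      obtain ⟨⟨⟨_, h2⟩, h3, h4⟩, h5⟩ := hc
      simp only [Finset.mem_coe, Finset.mem_filter, Finset.mem_range]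
      rw [← h5]
      exact ⟨h2, h3, h4⟩
    · intro t ht
      simp only [Finset.mem_coe, Finset.mem_filter, Finset.mem_range] at ht
      simp only [Finset.mem_coe, Finset.mem_filter, Crossed, mem_grid]
      refine ⟨⟨⟨hi, ht.1⟩, ht.2.1, ht.2.2⟩, ?_⟩
      simp
    · intro c hc
      simp only [Finset.mem_coe, Finset.mem_filter] at hc
      rw [← hc.2]
    · intro t _
      rfl
  -- row value
  have hrow : ∀ i < F, ((Finset.range S).filter
      (fun t => i*S < (t+1)*F ∧ t*F < (i+1)*S)).card + i*S/F = cC F S i := by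
    intro i hi
    rw [row_filter_eq F S i hF hi, Nat.card_Ico]
    have hble : i*S/F ≤ cC F S i := by
      have h1 := cdiv_le ((i+1)*S) F hF
      have h2 : i*S ≤ (i+1)*S := Nat.mul_le_mul_right S (by omega)
      have h3 : i*S/F * F ≤ cC F S i * F := by
        calc i*S/F * F ≤ i*S := floor_le _ _
        _ ≤ cC F S i * F := by unfold cC; omega
      exact Nat.le_of_mul_le_mul_right h3 hF
    omega
  -- telescoping sum
  have hrow2 : ∀ i < F, ((Finset.range S).filter
      (fun t => i*S < (t+1)*F ∧ t*F < (i+1)*S)).card + cdiv (i*S) F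
        + (if F ∣ i*S then 1 else 0) = cdiv ((i+1)*S) F + 1 := by
    intro i hi
    have h1 := hrow i hi
    have h2 := cdiv_eq_div (i*S) F hF
    unfold cC at h1
    omega
  have hsum : (Crossed F S).card + (∑ i ∈ Finset.range F, cdiv (i*S) F)
      + (∑ i ∈ Finset.range F, (if F ∣ i*S then 1 else 0))
      = (∑ i ∈ Finset.range F, cdiv ((i+1)*S) F) + F := by
    rw [hfib, ← Finset.sum_add_distrib, ← Finset.sum_add_distrib]
    rw [Finset.sum_congr rfl (fun i hi => hrow2 i (Finset.mem_range.mp hi))]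
    rw [Finset.sum_add_distrib]
    simp
  have htel : (∑ i ∈ Finset.range F, cdiv ((i+1)*S) F) + cdiv (0*S) F
      = (∑ i ∈ Finset.range F, cdiv (i*S) F) + cdiv (F*S) F := by
    have h1 : ∑ i ∈ Finset.range (F+1), cdiv (i*S) F
        = (∑ i ∈ Finset.range F, cdiv ((i+1)*S) F) + cdiv (0*S) F :=
      Finset.sum_range_succ' (fun j => cdiv (j*S) F) F
    have h2 : ∑ i ∈ Finset.range (F+1), cdiv (i*S) F
        = (∑ i ∈ Finset.range F, cdiv (i*S) F) + cdiv (F*S) F :=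
      Finset.sum_range_succ (fun j => cdiv (j*S) F) F
    omega
  have hg0 : cdiv (0*S) F = 0 := by
    simp only [Nat.zero_mul, cdiv]
    rw [Nat.zero_add, Nat.div_eq_of_lt (by omega)]
  have hgF : cdiv (F*S) F = S := by
    have h1 := cdiv_eq_div (F*S) F hF
    have h2 : F ∣ F*S := Dvd.intro S rfl
    rw [if_pos h2] at h1
    have h3 : F*S/F = S := Nat.mul_div_cancel_left S hF
    omega
  -- divisor count
  have hdvd : (∑ i ∈ Finset.range F, (if F ∣ i*S then 1 else 0)) = Nat.gcd F S := by
    set d := Nat.gcd F S with hdd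
    have hd : 0 < d := Nat.gcd_pos_of_pos_left S hF
    have hF'd : F/d*d = F := Nat.div_mul_cancel (Nat.gcd_dvd_left F S)
    have hS'd : S/d*d = S := Nat.div_mul_cancel (Nat.gcd_dvd_right F S)
    have hF' : 0 < F/d := by
      rcases Nat.eq_zero_or_pos (F/d) with h | h
      · rw [h] at hF'd; omega
      · exact h
    have hcop : Nat.Coprime (F/d) (S/d) := Nat.coprime_div_gcd_div_gcd hd
    have hiff : ∀ i : ℕ, (F ∣ i*S ↔ F/d ∣ i) := by
      intro i
      constructor
      · intro h
        have h1 : F/d*d ∣ i*(S/d)*d := by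
          rw [hF'd]
          have : i*(S/d)*d = i*S := by rw [Nat.mul_assoc, hS'd]
          rw [this]; exact h
        have h2 : F/d ∣ i*(S/d) := (Nat.mul_dvd_mul_iff_right hd).mp h1
        exact hcop.dvd_of_dvd_mul_right h2
      · rintro ⟨k, rfl⟩
        refine ⟨k*(S/d), ?_⟩
        calc F/d*k*S = F/d*k*(S/d*d) := by rw [hS'd]
        _ = F/d*d*(k*(S/d)) := by ring
        _ = F*(k*(S/d)) := by rw [hF'd]
    have hsb : (∑ i ∈ Finset.range F, (if F ∣ i*S then 1 else 0))
        = ((Finset.range F).filter (fun i => F ∣ i*S)).card := by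
      rw [Finset.card_filter]
    rw [hsb]
    have hfe : (Finset.range F).filter (fun i => F ∣ i*S)
        = (Finset.range d).image (fun k => k*(F/d)) := by
      ext n
      simp only [Finset.mem_filter, Finset.mem_range, Finset.mem_image]
      constructor
      · rintro ⟨hn, hdvdn⟩
        rw [hiff n] at hdvdn
        obtain ⟨k, rfl⟩ := hdvdn
        refine ⟨k, ?_, Nat.mul_comm _ _⟩
        by_contra hk
        push_neg at hk
        have : d*(F/d) ≤ k*(F/d) := Nat.mul_le_mul_right _ hk
        have hdF : d*(F/d) = F := by rw [Nat.mul_comm]; exact hF'd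
        have hcm : F/d*k = k*(F/d) := Nat.mul_comm _ _
        omega
      · rintro ⟨k, hk, rfl⟩
        constructor
        · have : k*(F/d) < d*(F/d) := (Nat.mul_lt_mul_right hF').mpr hk
          have hdF : d*(F/d) = F := by rw [Nat.mul_comm]; exact hF'd
          omega
        · rw [hiff]
          exact ⟨k, Nat.mul_comm _ _⟩
    rw [hfe, Finset.card_image_of_injective _ (fun a b h => by
      exact Nat.eq_of_mul_eq_mul_right hF' h), Finset.card_range]
  omega


section Construction

variable (F S : ℕ)

/-- the below cell of column j -/
noncomputable def cell (j : Fin (Below F S).card) : ℕ × ℕ :=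
  ((Below F S).equivFin.symm j : ℕ × ℕ)

lemma cell_mem (j : Fin (Below F S).card) : cell F S j ∈ Below F S :=
  ((Below F S).equivFin.symm j).2

lemma cell_inj : Function.Injective (cell F S) := by
  intro j j' h
  have := (Below F S).equivFin.symm.injective (Subtype.ext h)
  exact this

noncomputable def P₀ : Fin F → Fin (Below F S).card → Option (Fin S) := fun a j =>
  if hs : (a : ℕ) = (cell F S j).1 ∧ (cell F S j).2 < S then
    some ⟨(cell F S j).2, hs.2⟩
  else if ht : (a : ℕ) = phiX F S (cell F S j).1 (cell F S j).2
      ∧ phiT F S (cell F S j).1 (cell F S j).2 < S then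
    some ⟨phiT F S (cell F S j).1 (cell F S j).2, ht.2⟩
  else none

variable {F S}

lemma cell_spec (hF : 0 < F) (hS : 0 < S) (j : Fin (Below F S).card) :
    (cell F S j).1 < F ∧ (cell F S j).2 < S ∧
      ((cell F S j).1 + 1)*S ≤ (cell F S j).2 * F := by
  have h := cell_mem F S j
  simp only [Below, Finset.mem_filter, mem_grid] at h
  exact ⟨h.1.1, h.1.2, h.2⟩

/-- characterization of entries -/
lemma P₀_eq_some (hF : 0 < F) (hS : 0 < S) {a : Fin F} {j : Fin (Below F S).card}
    {v : Fin S} :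
    P₀ F S a j = some v ↔
      (((a:ℕ) = (cell F S j).1 ∧ (v:ℕ) = (cell F S j).2) ∨
       ((a:ℕ) = phiX F S (cell F S j).1 (cell F S j).2 ∧
        (v:ℕ) = phiT F S (cell F S j).1 (cell F S j).2)) := by
  obtain ⟨h1, h2, h3⟩ := cell_spec hF hS j
  obtain ⟨hx1, hx2, _, _, _, _, _, htlt, _, _, _⟩ := phi_facts hF hS h1 h2 h3
  unfold P₀
  by_cases hc : (a : ℕ) = (cell F S j).1
  · rw [dif_pos ⟨hc, h2⟩]
    constructor
    · intro h
      left
      have := Option.some.inj h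
      exact ⟨hc, by rw [← this]⟩
    · intro h
      rcases h with ⟨_, hv⟩ | ⟨ha, _⟩
      · congr 1
        exact Fin.val_injective hv.symm
      · exfalso; omega
  · rw [dif_neg (fun hh => hc hh.1)]
    by_cases hc2 : (a : ℕ) = phiX F S (cell F S j).1 (cell F S j).2
    · rw [dif_pos ⟨hc2, by omega⟩]
      constructor
      · intro h
        right
        have := Option.some.inj h
        exact ⟨hc2, by rw [← this]⟩
      · intro h
        rcases h with ⟨ha, _⟩ | ⟨_, hv⟩
        · exact absurd ha hc
        · congr 1
          exact Fin.val_injective hv.symm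
    · rw [dif_neg (fun hh => hc2 hh.1)]
      constructor
      · intro h; exact absurd h (by simp)
      · intro h
        rcases h with ⟨ha, _⟩ | ⟨ha, _⟩
        · exact absurd ha hc
        · exact absurd ha hc2

lemma P₀_eq_none (hF : 0 < F) (hS : 0 < S) {a : Fin F} {j : Fin (Below F S).card} :
    P₀ F S a j = none ↔
      (a:ℕ) ≠ (cell F S j).1 ∧
      (a:ℕ) ≠ phiX F S (cell F S j).1 (cell F S j).2 := by
  obtain ⟨h1, h2, h3⟩ := cell_spec hF hS j
  obtain ⟨hx1, hx2, _, _, _, _, _, htlt, _, _, _⟩ := phi_facts hF hS h1 h2 h3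
  unfold P₀
  by_cases hc : (a : ℕ) = (cell F S j).1
  · rw [dif_pos ⟨hc, h2⟩]; simp [hc]
  · rw [dif_neg (fun hh => hc hh.1)]
    by_cases hc2 : (a : ℕ) = phiX F S (cell F S j).1 (cell F S j).2
    · rw [dif_pos ⟨hc2, by omega⟩]; simp [hc, hc2]
    · rw [dif_neg (fun hh => hc2 hh.1)]; simp [hc, hc2]

/-- bundled per-column facts -/
lemma col_facts (hF : 0 < F) (hS : 0 < S) (j : Fin (Below F S).card) :
    (cell F S j).1 < F ∧ (cell F S j).2 < S ∧
    ((cell F S j).1 + 1)*S ≤ (cell F S j).2 * F ∧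
    phiX F S (cell F S j).1 (cell F S j).2 < F ∧
    (cell F S j).1 < phiX F S (cell F S j).1 (cell F S j).2 ∧
    (phiX F S (cell F S j).1 (cell F S j).2)*S < ((cell F S j).2+1)*F ∧
    (cell F S j).2*F < (phiX F S (cell F S j).1 (cell F S j).2 + 1)*S ∧
    (phiT F S (cell F S j).1 (cell F S j).2)*F < ((cell F S j).1+1)*S ∧
    (cell F S j).1*S < (phiT F S (cell F S j).1 (cell F S j).2 + 1)*F ∧
    (phiT F S (cell F S j).1 (cell F S j).2 + 1)*F
      ≤ (phiX F S (cell F S j).1 (cell F S j).2)*S ∧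
    phiT F S (cell F S j).1 (cell F S j).2 < (cell F S j).2 := by
  obtain ⟨h1, h2, h3⟩ := cell_spec hF hS j
  obtain ⟨g1, g2, g3, g4, g5, g6, g7, g8, _, _, _⟩ := phi_facts hF hS h1 h2 h3
  exact ⟨h1, h2, h3, g1, g2, g3, g4, g5, g6, g7, g8⟩

/-- a cell cannot be simultaneously "below" in one column and "above" in another -/
lemma below_above_absurd {aa ss : ℕ} (hS : 0 < S)
    (hb : (aa+1)*S ≤ ss*F) (ha : (ss+1)*F ≤ aa*S) : False := by
  have d1 : (aa+1)*S = aa*S + S := by ring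
  have d2 : (ss+1)*F = ss*F + F := by ring
  omega

theorem construction_isPDA (hF : 0 < F) (hS : 0 < S) :
    IsPDA (Below F S).card F (F-2) S (P₀ F S) := by
  refine ⟨?_, ?_, ?_, ?_⟩
  -- (1) each value at most once per row
  · intro i j j' s h h'
    rw [P₀_eq_some hF hS] at h h'
    obtain ⟨c1, c2, c3, _, _, x1, x2, t1, t2, habv, tlts⟩ := col_facts hF hS j
    obtain ⟨c1', c2', c3', _, _, x1', x2', t1', t2', habv', tlts'⟩ := col_facts hF hS j'
    rcases h with ⟨ha, hv⟩ | ⟨ha, hv⟩ <;> rcases h' with ⟨ha', hv'⟩ | ⟨ha', hv'⟩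
    · apply cell_inj F S
      have : cell F S j = ((i:ℕ), (s:ℕ)) := by
        rw [Prod.ext_iff]; exact ⟨ha.symm, hv.symm⟩
      have h2 : cell F S j' = ((i:ℕ), (s:ℕ)) := by
        rw [Prod.ext_iff]; exact ⟨ha'.symm, hv'.symm⟩
      rw [this, h2]
    · -- below in j, above in j'
      exfalso
      have hb : ((i:ℕ)+1)*S ≤ (s:ℕ)*F := by rw [ha, hv]; exact c3
      have hab : ((s:ℕ)+1)*F ≤ (i:ℕ)*S := by
        rw [ha', hv']; exact habv'
      exact below_above_absurd hS hb hab
    · exfalso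
      have hb : ((i:ℕ)+1)*S ≤ (s:ℕ)*F := by rw [ha', hv']; exact c3'
      have hab : ((s:ℕ)+1)*F ≤ (i:ℕ)*S := by rw [ha, hv]; exact habv
      exact below_above_absurd hS hb hab
    · -- both above
      apply cell_inj F S
      have hxx : phiX F S (cell F S j).1 (cell F S j).2
          = phiX F S (cell F S j').1 (cell F S j').2 := by omega
      have htt : phiT F S (cell F S j).1 (cell F S j).2
          = phiT F S (cell F S j').1 (cell F S j').2 := by omega
      obtain ⟨hie, hse⟩ := phi_inj hF hS c1 c2 c3 c1' c2' c3' hxx htt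
      rw [Prod.ext_iff]; exact ⟨hie, hse⟩
  -- (2) each value at most once per column
  · intro i i' j s h h'
    rw [P₀_eq_some hF hS] at h h'
    obtain ⟨c1, c2, c3, _, _, x1, x2, t1, t2, habv, tlts⟩ := col_facts hF hS j
    rcases h with ⟨ha, hv⟩ | ⟨ha, hv⟩ <;> rcases h' with ⟨ha', hv'⟩ | ⟨ha', hv'⟩
    · exact Fin.val_injective (by omega)
    · exfalso; omega
    · exfalso; omega
    · exact Fin.val_injective (by omega)
  -- (3) corner condition
  · intro a c b d s hne hab hcd
    rw [P₀_eq_some hF hS] at hab hcd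
    obtain ⟨c1, c2, c3, _, hix, x1, x2, t1, t2, habv, tlts⟩ := col_facts hF hS b
    obtain ⟨c1', c2', c3', _, hix', x1', x2', t1', t2', habv', tlts'⟩ := col_facts hF hS d
    -- the cell (a,s) is not crossed
    have hnca : ((a:ℕ)+1)*S ≤ (s:ℕ)*F ∨ ((s:ℕ)+1)*F ≤ (a:ℕ)*S := by
      rcases hab with ⟨ha, hv⟩ | ⟨ha, hv⟩
      · left; rw [ha, hv]; exact c3
      · right; rw [ha, hv]; omega
    have hncc : ((c:ℕ)+1)*S ≤ (s:ℕ)*F ∨ ((s:ℕ)+1)*F ≤ (c:ℕ)*S := by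
      rcases hcd with ⟨ha, hv⟩ | ⟨ha, hv⟩
      · left; rw [ha, hv]; exact c3'
      · right; rw [ha, hv]; omega
    -- b ≠ d
    have hbd : b ≠ d := by
      intro hbdeq
      subst hbdeq
      have hac : a = c := by
        rcases hab with ⟨ha, hv⟩ | ⟨ha, hv⟩ <;> rcases hcd with ⟨ha', hv'⟩ | ⟨ha', hv'⟩
        · exact Fin.val_injective (by omega)
        · exfalso; omega
        · exfalso; omega
        · exact Fin.val_injective (by omega)
      exact hne (by rw [hac])
    -- a ≠ c as naturals
    have hac : (a:ℕ) ≠ (c:ℕ) := by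
      intro haceq
      rcases hab with ⟨ha, hv⟩ | ⟨ha, hv⟩ <;> rcases hcd with ⟨ha', hv'⟩ | ⟨ha', hv'⟩
      · apply hbd
        apply cell_inj F S
        rw [Prod.ext_iff]
        constructor
        · omega
        · omega
      · have hb1 : ((a:ℕ)+1)*S ≤ (s:ℕ)*F := by rw [ha, hv]; exact c3
        have hb2 : ((s:ℕ)+1)*F ≤ (a:ℕ)*S := by rw [haceq, ha', hv']; exact habv'
        exact below_above_absurd hS hb1 hb2
      · have hb1 : ((c:ℕ)+1)*S ≤ (s:ℕ)*F := by rw [ha', hv']; exact c3'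
        have hb2 : ((s:ℕ)+1)*F ≤ (c:ℕ)*S := by rw [← haceq, ha, hv]; exact habv
        exact below_above_absurd hS hb1 hb2
      · apply hbd
        apply cell_inj F S
        have hxx : phiX F S (cell F S b).1 (cell F S b).2
            = phiX F S (cell F S d).1 (cell F S d).2 := by omega
        have htt : phiT F S (cell F S b).1 (cell F S b).2
            = phiT F S (cell F S d).1 (cell F S d).2 := by omega
        obtain ⟨hie, hse⟩ := phi_inj hF hS c1 c2 c3 c1' c2' c3' hxx htt
        rw [Prod.ext_iff]; exact ⟨hie, hse⟩
    constructor
    · -- P₀ a d = none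
      rw [P₀_eq_none hF hS]
      rcases hcd with ⟨ha', hv'⟩ | ⟨ha', hv'⟩
      · constructor
        · omega
        · -- a ≠ phiX of column d; phiX is crossed with value s
          intro haeq
          rcases hnca with h | h
          · rw [haeq] at h
            have : (s:ℕ)*F < (phiX F S (cell F S d).1 (cell F S d).2 + 1)*S := by
              rw [hv']; exact x2'
            have d1 : (phiX F S (cell F S d).1 (cell F S d).2 + 1)*S
                = phiX F S (cell F S d).1 (cell F S d).2 * S + S := by ring
            have d2 : (phiX F S (cell F S d).1 (cell F S d).2 + 1)*S
                ≤ (s:ℕ)*F + S := by omega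
            omega
          · rw [haeq] at h
            have : (phiX F S (cell F S d).1 (cell F S d).2)*S < ((s:ℕ)+1)*F := by
              rw [hv']; exact x1'
            have d2 : ((s:ℕ)+1)*F = (s:ℕ)*F + F := by ring
            omega
      · constructor
        · -- (cell d).1 is crossed with value s = tj d
          intro haeq
          rcases hnca with h | h
          · rw [haeq] at h
            have h9 : (s:ℕ)*F < ((cell F S d).1 + 1)*S := by rw [hv']; exact t1'
            have d1 : ((cell F S d).1+1)*S = (cell F S d).1*S + S := by ring
            have d2 : ((a:ℕ)+1)*S = (a:ℕ)*S + S := by ring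
            omega
          · rw [haeq] at h
            have h9 : (cell F S d).1*S < ((s:ℕ)+1)*F := by rw [hv']; exact t2'
            omega
        · omega
    · -- P₀ c b = none
      rw [P₀_eq_none hF hS]
      rcases hab with ⟨ha, hv⟩ | ⟨ha, hv⟩
      · constructor
        · omega
        · intro hceq
          rcases hncc with h | h
          · rw [hceq] at h
            have h9 : (s:ℕ)*F < (phiX F S (cell F S b).1 (cell F S b).2 + 1)*S := by
              rw [hv]; exact x2
            have d1 : (phiX F S (cell F S b).1 (cell F S b).2 + 1)*S
                = phiX F S (cell F S b).1 (cell F S b).2 * S + S := by ring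
            omega
          · rw [hceq] at h
            have h9 : (phiX F S (cell F S b).1 (cell F S b).2)*S < ((s:ℕ)+1)*F := by
              rw [hv]; exact x1
            have d2 : ((s:ℕ)+1)*F = (s:ℕ)*F + F := by ring
            omega
      · constructor
        · intro hceq
          rcases hncc with h | h
          · rw [hceq] at h
            have h9 : (s:ℕ)*F < ((cell F S b).1 + 1)*S := by rw [hv]; exact t1
            have d1 : ((cell F S b).1+1)*S = (cell F S b).1*S + S := by ring
            have d2 : ((c:ℕ)+1)*S = (c:ℕ)*S + S := by ring
            omega
          · rw [hceq] at h
            have h9 : (cell F S b).1*S < ((s:ℕ)+1)*F := by rw [hv]; exact t2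
            omega
        · omega
  -- (4) star count
  · intro j
    obtain ⟨c1, c2, c3, hx1, hix, x1, x2, t1, t2, habv, tlts⟩ := col_facts hF hS j
    have hcompl : (Finset.univ.filter (fun i : Fin F => ¬ P₀ F S i j = none)).card = 2 := by
      have hset : (Finset.univ.filter (fun i : Fin F => ¬ P₀ F S i j = none))
          = {(⟨(cell F S j).1, c1⟩ : Fin F),
             ⟨phiX F S (cell F S j).1 (cell F S j).2, hx1⟩} := by
        ext i
        simp only [Finset.mem_filter, Finset.mem_univ, true_and, Finset.mem_insert,
          Finset.mem_singleton]
        rw [P₀_eq_none hF hS]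
        constructor
        · intro h
          by_cases hc : (i:ℕ) = (cell F S j).1
          · left; exact Fin.val_injective hc
          · right
            apply Fin.val_injective
            simp only
            by_contra hc2
            exact h ⟨hc, hc2⟩
        · intro h
          rcases h with h | h
          · intro hcon
            exact hcon.1 (by rw [h])
          · intro hcon
            exact hcon.2 (by rw [h])
      rw [hset]
      rw [Finset.card_insert_of_notMem, Finset.card_singleton]
      simp only [Finset.mem_singleton]
      intro hcon
      have := Fin.val_eq_of_eq hcon
      simp only at this
      omega
    have hpart := Finset.card_filter_add_card_filter_not
      (s := (Finset.univ : Finset (Fin F)))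
      (p := fun i : Fin F => P₀ F S i j = none)
    have huniv : (Finset.univ : Finset (Fin F)).card = F := by simp
    omega

theorem construction_exists (hF : 0 < F) (hS : 0 < S) :
    PDAExists (Below F S).card F (F-2) S :=
  ⟨P₀ F S, construction_isPDA hF hS⟩

end Construction


section PartA

variable {F K S : ℕ} {P : Fin F → Fin K → Option (Fin S)}

/-- each column of a (K,F,F-2,S) PDA has exactly two filled cells -/
lemma col_two (hF : 2 ≤ F) (hP : IsPDA K F (F-2) S P) (j : Fin K) :
    (Finset.univ.filter (fun a : Fin F => P a j ≠ none)).card = 2 := by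
  have h1 := hP.2.2.2 j
  have h2 := Finset.card_filter_add_card_filter_not
    (s := (Finset.univ : Finset (Fin F))) (p := fun a : Fin F => P a j = none)
  have h3 : (Finset.univ : Finset (Fin F)).card = F := by simp
  have h4 : (Finset.univ.filter (fun a : Fin F => ¬ P a j = none)).card
      = (Finset.univ.filter (fun a : Fin F => P a j ≠ none)).card := rfl
  omega

/-- for each filled cell there is a partner cell in the same column, in another row -/
lemma partner_exists (hF : 2 ≤ F) (hP : IsPDA K F (F-2) S P) (i : Fin F) (j : Fin K)
    (hij : P i j ≠ none) : ∃ (a : Fin F) (v : Fin S), a ≠ i ∧ P a j = some v := by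
  have h2 := col_two hF hP j
  obtain ⟨u, w, huw, hset⟩ := Finset.card_eq_two.mp h2
  have hi : i ∈ Finset.univ.filter (fun a : Fin F => P a j ≠ none) := by
    simp only [Finset.mem_filter, Finset.mem_univ, true_and]; exact hij
  rw [hset] at hi
  simp only [Finset.mem_insert, Finset.mem_singleton] at hi
  have hu : u ∈ Finset.univ.filter (fun a : Fin F => P a j ≠ none) := by
    rw [hset]; simp
  have hw : w ∈ Finset.univ.filter (fun a : Fin F => P a j ≠ none) := by
    rw [hset]; simp
  simp only [Finset.mem_filter, Finset.mem_univ, true_and] at hu hw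
  rcases hi with rfl | rfl
  · rcases ho : P w j with _ | v
    · exact absurd ho hw
    · exact ⟨w, v, huw.symm, ho⟩
  · rcases ho : P u j with _ | v
    · exact absurd ho hu
    · exact ⟨u, v, huw, ho⟩

/-- Part (a): every row has at most S - (m+1) filled cells -/
lemma row_bound {m r : ℕ} (hF : 7 ≤ F) (hm : 1 ≤ m) (hr : 3 ≤ r) (hr' : r ≤ F - 3)
    (hS : S = m * F + r) (hP : IsPDA K F (F-2) S P) (i : Fin F) :
    (Finset.univ.filter (fun j : Fin K => P i j ≠ none)).card ≤ S - (m + 1) := by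
  classical
  have hF2 : 2 ≤ F := by omega
  have hS0 : 0 < S := by
    have : 1*7 ≤ m*F := Nat.mul_le_mul hm (by omega)
    omega
  set T := Finset.univ.filter (fun j : Fin K => P i j ≠ none) with hT
  set A : Finset (Fin S) :=
    T.image (fun j => (P i j).getD ⟨0, hS0⟩) with hA
  -- value map injective on T
  have hvalinj : ∀ j ∈ T, ∀ j' ∈ T,
      (P i j).getD ⟨0, hS0⟩ = (P i j').getD ⟨0, hS0⟩ → j = j' := by
    intro j hj j' hj' heq
    simp only [hT, Finset.mem_filter, Finset.mem_univ, true_and] at hj hj'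
    rcases h1 : P i j with _ | v
    · exact absurd h1 hj
    rcases h2 : P i j' with _ | v'
    · exact absurd h2 hj'
    rw [h1, h2] at heq
    simp only [Option.getD_some] at heq
    subst heq
    exact hP.1 i j j' v h1 h2
  have hAcard : A.card = T.card := Finset.card_image_of_injOn hvalinj
  -- choose partner cells
  have hch : ∀ j ∈ T, ∃ p : Fin F × Fin S, p.1 ≠ i ∧ P p.1 j = some p.2 := by
    intro j hj
    simp only [hT, Finset.mem_filter, Finset.mem_univ, true_and] at hj
    obtain ⟨a, v, ha, hav⟩ := partner_exists hF2 hP i j hj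
    exact ⟨(a, v), ha, hav⟩
  choose f hf1 hf2 using hch
  -- f maps T into (univ.erase i) ×ˢ (univ \ A) injectively
  have hmem : ∀ j (hj : j ∈ T), f j hj ∈ (Finset.univ.erase i) ×ˢ (Finset.univ \ A) := by
    intro j hj
    rw [Finset.mem_product]
    constructor
    · exact Finset.mem_erase.mpr ⟨hf1 j hj, Finset.mem_univ _⟩
    · rw [Finset.mem_sdiff]
      refine ⟨Finset.mem_univ _, ?_⟩
      intro hmemA
      simp only [hA, Finset.mem_image] at hmemA
      obtain ⟨j'', hj'', heq⟩ := hmemA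
      -- P i j'' = some (f j hj).2
      have hj''ne : P i j'' ≠ none := by
        simp only [hT, Finset.mem_filter, Finset.mem_univ, true_and] at hj''
        exact hj''
      rcases h1 : P i j'' with _ | v
      · exact absurd h1 hj''ne
      rw [h1] at heq
      simp only [Option.getD_some] at heq
      rw [heq] at h1
      have hpair : ((f j hj).1, j) ≠ (i, j'') := by
        intro hcon
        rw [Prod.mk.injEq] at hcon
        exact hf1 j hj hcon.1
      have := hP.2.2.1 (f j hj).1 i j j'' (f j hj).2 hpair (hf2 j hj) h1
      -- P (f j hj).1 j'' = none ∧ P i j = none ; second contradicts j ∈ T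
      have hjT : P i j ≠ none := by
        simp only [hT, Finset.mem_filter, Finset.mem_univ, true_and] at hj
        exact hj
      exact hjT this.2
  have hinj : ∀ j (hj : j ∈ T) j' (hj' : j' ∈ T), f j hj = f j' hj' → j = j' := by
    intro j hj j' hj' heq
    have h1 := hf2 j hj
    have h2 := hf2 j' hj'
    rw [← heq] at h2
    exact hP.1 (f j hj).1 j j' (f j hj).2 h1 h2
  have hcard : T.card ≤ ((Finset.univ.erase i) ×ˢ (Finset.univ \ A)).card :=
    Finset.card_le_card_of_injOn (fun j => if hj : j ∈ T then f j hj else (i, ⟨0, hS0⟩))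
      (fun j hj => by
        have he : (fun j => if hj : j ∈ T then f j hj else (i, ⟨0, hS0⟩)) j
            = f j hj := dif_pos hj
        rw [he]; exact hmem j hj)
      (fun j hj j' hj' heq => by
        rw [Finset.mem_coe] at hj hj'
        have he : (fun j => if hj : j ∈ T then f j hj else (i, ⟨0, hS0⟩)) j
            = f j hj := dif_pos hj
        have he' : (fun j => if hj : j ∈ T then f j hj else (i, ⟨0, hS0⟩)) j'
            = f j' hj' := dif_pos hj'
        rw [he, he'] at heq
        exact hinj j hj j' hj' heq)
  have hprod : ((Finset.univ.erase i) ×ˢ (Finset.univ \ A)).card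
      = (F-1) * (S - A.card) := by
    rw [Finset.card_product, Finset.card_erase_of_mem (Finset.mem_univ i),
      Finset.card_sdiff_of_subset (Finset.subset_univ A)]
    simp
  -- final arithmetic
  have hn : T.card ≤ (F-1) * (S - T.card) := by
    rw [← hAcard]; omega
  by_contra hgt
  push_neg at hgt
  have h5 : S - T.card ≤ m := by omega
  have h6 : (F-1) * (S - T.card) ≤ (F-1) * m := Nat.mul_le_mul_left _ h5
  have h7 : (F-1)*m + m = F*m := by
    have hh : (F-1) + 1 = F := by omega
    calc (F-1)*m + m = ((F-1)+1)*m := by ring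
    _ = F*m := by rw [hh]
  have h8 : m*F = F*m := Nat.mul_comm _ _
  omega

end PartA


lemma sum_rows_eq {F K S : ℕ} {P : Fin F → Fin K → Option (Fin S)}
    (hF : 2 ≤ F) (hP : IsPDA K F (F-2) S P) :
    ∑ i : Fin F, (Finset.univ.filter (fun j : Fin K => P i j ≠ none)).card = 2*K := by
  classical
  set Q : Finset (Fin F × Fin K) :=
    Finset.univ.filter (fun p => P p.1 p.2 ≠ none) with hQ
  have h1 : Q.card = ∑ i : Fin F,
      (Finset.univ.filter (fun j : Fin K => P i j ≠ none)).card := by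
    rw [Finset.card_eq_sum_card_fiberwise (f := Prod.fst)
      (t := (Finset.univ : Finset (Fin F))) (fun c _ => Finset.mem_univ _)]
    apply Finset.sum_congr rfl
    intro i _
    apply Finset.card_nbij' (i := fun p => p.2) (j := fun j => (i, j))
    · intro p hp
      simp only [hQ, Finset.mem_coe, Finset.mem_filter, Finset.mem_univ, true_and] at hp ⊢
      rw [← hp.2]; exact hp.1
    · intro j hj
      simp only [hQ, Finset.mem_coe, Finset.mem_filter, Finset.mem_univ, true_and] at hj ⊢
      exact ⟨hj, trivial⟩
    · intro p hp
      simp only [Finset.mem_coe, Finset.mem_filter] at hp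
      rw [← hp.2]
    · intro j _
      rfl
  have h2 : Q.card = 2*K := by
    rw [Finset.card_eq_sum_card_fiberwise (f := Prod.snd)
      (t := (Finset.univ : Finset (Fin K))) (fun c _ => Finset.mem_univ _)]
    have hcol : ∀ j : Fin K, (Q.filter (fun p => p.2 = j)).card = 2 := by
      intro j
      rw [← col_two hF hP j]
      apply Finset.card_nbij' (i := fun p => p.1) (j := fun a => (a, j))
      · intro p hp
        simp only [hQ, Finset.mem_coe, Finset.mem_filter, Finset.mem_univ, true_and] at hp ⊢
        rw [← hp.2]; exact hp.1
      · intro a ha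
        simp only [hQ, Finset.mem_coe, Finset.mem_filter, Finset.mem_univ, true_and] at ha ⊢
        exact ⟨ha, trivial⟩
      · intro p hp
        simp only [Finset.mem_coe, Finset.mem_filter] at hp
        rw [← hp.2]
      · intro a _
        rfl
    rw [Finset.sum_congr rfl (fun j _ => hcol j)]
    simp [Finset.card_univ, Nat.mul_comm]
  omega


end PDAC

theorem pda_max_row_count (F m r S d K : ℕ) (hF : 7 ≤ F) (hm : 1 ≤ m)
    (hr : 3 ≤ r) (hr' : r ≤ F - 3) (hS : S = m * F + r) (hd : d = Nat.gcd F S)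
    (P : Fin F → Fin K → Option (Fin S)) (hP : IsPDA K F (F - 2) S P)
    (hmax : ∀ K', PDAExists K' F (F - 2) S → K' ≤ K) :
    (∀ i : Fin F,
        (Finset.univ.filter (fun j : Fin K => P i j ≠ none)).card ≤ S - (m + 1)) ∧
      F - r + d ≤ (Finset.univ.filter (fun i : Fin F =>
        (Finset.univ.filter (fun j : Fin K => P i j ≠ none)).card = S - (m + 1))).card := by
  classical
  have hF0 : 0 < F := by omega
  have hm7 : m*7 ≤ m*F := Nat.mul_le_mul_left m hF
  have hmF : m*F = F*m := Nat.mul_comm _ _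
  have hS0 : 0 < S := by omega
  constructor
  · exact PDAC.row_bound hF hm hr hr' hS hP
  -- part (b)
  set M := S - (m+1) with hM
  set n : Fin F → ℕ :=
    fun i => (Finset.univ.filter (fun j : Fin K => P i j ≠ none)).card with hn
  have hrow : ∀ i : Fin F, n i ≤ M := fun i => PDAC.row_bound hF hm hr hr' hS hP i
  have hsum : ∑ i : Fin F, n i = 2*K := PDAC.sum_rows_eq (by omega) hP
  -- lower bound on K from the construction
  have hK' : (PDAC.Below F S).card ≤ K :=
    hmax _ (PDAC.construction_exists hF0 hS0)
  have hcount : 2*(PDAC.Below F S).card + (F + S) = F*S + d := by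
    have h1 := PDAC.below_card_eq_above_card F S
    have h2 := PDAC.below_above_crossed_partition F S
    have h3 := PDAC.crossed_card F S hF0 hS0
    omega
  -- counting full rows
  set t := (Finset.univ.filter (fun i : Fin F => n i = M)).card with ht
  have htF : t ≤ F := by
    calc t ≤ (Finset.univ : Finset (Fin F)).card := Finset.card_filter_le _ _
    _ = F := by simp
  have hsplit : ∑ i : Fin F, n i
      = (∑ i ∈ Finset.univ.filter (fun i : Fin F => n i = M), n i)
        + ∑ i ∈ Finset.univ.filter (fun i : Fin F => ¬ n i = M), n i :=
    (Finset.sum_filter_add_sum_filter_not _ _ _).symm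
  have hfull : (∑ i ∈ Finset.univ.filter (fun i : Fin F => n i = M), n i) = t*M := by
    rw [Finset.sum_congr rfl (fun i hi => (Finset.mem_filter.mp hi).2)]
    simp [ht, Nat.mul_comm]
  have hrest : (∑ i ∈ Finset.univ.filter (fun i : Fin F => ¬ n i = M), n i)
      ≤ (F - t)*(M-1) := by
    have hcardrest : (Finset.univ.filter (fun i : Fin F => ¬ n i = M)).card = F - t := by
      have := Finset.card_filter_add_card_filter_not
        (s := (Finset.univ : Finset (Fin F))) (p := fun i : Fin F => n i = M)
      have huc : (Finset.univ : Finset (Fin F)).card = F := by simp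
      omega
    calc (∑ i ∈ Finset.univ.filter (fun i : Fin F => ¬ n i = M), n i)
        ≤ ∑ _i ∈ Finset.univ.filter (fun i : Fin F => ¬ n i = M), (M-1) := by
          apply Finset.sum_le_sum
          intro i hi
          have h1 := hrow i
          have h2 := (Finset.mem_filter.mp hi).2
          omega
    _ = (F - t)*(M-1) := by rw [Finset.sum_const, hcardrest, smul_eq_mul]
  -- final arithmetic
  have hM1 : 1 ≤ M := by omega
  have hE1 : t*M + (F-t)*(M-1) + F = F*M + t := by
    have e1 : t*M = t*(M-1) + t := by
      have hh : (M-1) + 1 = M := by omega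
      calc t*M = t*((M-1)+1) := by rw [hh]
      _ = t*(M-1) + t := by ring
    have e2 : F*M = F*(M-1) + F := by
      have hh : (M-1) + 1 = M := by omega
      calc F*M = F*((M-1)+1) := by rw [hh]
      _ = F*(M-1) + F := by ring
    have e3 : (F-t)*(M-1) + t*(M-1) = F*(M-1) := by
      have hh : (F-t) + t = F := by omega
      calc (F-t)*(M-1) + t*(M-1) = ((F-t)+t)*(M-1) := by ring
      _ = F*(M-1) := by rw [hh]
    omega
  have hE2 : F*M + F*m + F = F*S := by
    have hh : M + (m+1) = S := by omega
    calc F*M + F*m + F = F*(M + (m+1)) := by ring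
    _ = F*S := by rw [hh]
  omega
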